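/- arXiv:1012.5152 — 2 statements merged into one kernel-verified Lean document; each statement's English description precedes it below -/
import Mathlib

section
/- The Haar family 𝓗 is an orthonormal basis of the complex Hilbert space L²(μ) = L²(Σ_A, B, μ; ℂ): its elements are pairwise orthogonal unit vectors, and its closed linear span is all of L²(μ). -/
open MeasureTheory Filter
open scoped ENNReal NNReal

namespace SFT

variable {l : ℕ}

/-- The one-sided subshift of finite type determined by the `l × l` matrix `A`:
infinite sequences with transitions allowed by `A`. -/
abbrev SigmaA (l : ℕ) (A : Matrix (Fin l) (Fin l) ℕ) : Type :=
  {ω : ℕ → Fin l // ∀ k, A (ω k) (ω (k + 1)) = 1}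

/-- The left shift `σ` on `SigmaA l A`. -/
def shift {A : Matrix (Fin l) (Fin l) ℕ} (ω : SigmaA l A) : SigmaA l A :=
  ⟨fun n => ω.1 (n + 1), fun k => ω.2 (k + 1)⟩

/-- Birkhoff sums `S_k φ = ∑_{m<k} φ ∘ σ^m`. -/
def birkhoff {A : Matrix (Fin l) (Fin l) ℕ} (φ : SigmaA l A → ℝ) (k : ℕ) (ω : SigmaA l A) : ℝ :=
  ∑ m ∈ Finset.range k, φ (shift^[m] ω)

/-- The matrix `A` has `0`-`1` entries and is irreducible and aperiodic
(some power of `A` has all entries strictly positive). -/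
def Primitive (A : Matrix (Fin l) (Fin l) ℕ) : Prop :=
  (∀ i j, A i j = 0 ∨ A i j = 1) ∧ ∃ n : ℕ, 0 < n ∧ ∀ i j, 0 < (A ^ n) i j

/-- A finite word is admissible, i.e. belongs to `Σ_A^*`. -/
def Admissible (A : Matrix (Fin l) (Fin l) ℕ) (x : List (Fin l)) : Prop :=
  x ≠ [] ∧ ∀ (i : ℕ) (h : i + 1 < x.length), A (x[i]'(by omega)) (x[i + 1]'h) = 1

/-- The cylinder set `[x]` of a finite word (the empty word gives all of `Σ_A`). -/
def cylinder (A : Matrix (Fin l) (Fin l) ℕ) (x : List (Fin l)) : Set (SigmaA l A) :=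
  {ω | ∀ (i : ℕ) (h : i < x.length), ω.1 i = x[i]'h}

/-- The initial word `(ω_1, …, ω_k)` of `ω`. -/
def wordPrefix {A : Matrix (Fin l) (Fin l) ℕ} (ω : SigmaA l A) (k : ℕ) : List (Fin l) :=
  List.ofFn (fun i : Fin k => ω.1 i)

/-- `μ` is a Gibbs measure for the potential `φ` with pressure `P`:
`c⁻¹ ≤ μ([ω_1,…,ω_k]) / exp(S_kφ(ω) − kP) ≤ c` for some `c > 1`. -/
def IsGibbs {A : Matrix (Fin l) (Fin l) ℕ} (φ : SigmaA l A → ℝ) (P : ℝ)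
    (μ : Measure (SigmaA l A)) : Prop :=
  ∃ c : ℝ, 1 < c ∧ ∀ (ω : SigmaA l A) (k : ℕ), 0 < k →
    c⁻¹ ≤ (μ (cylinder A (wordPrefix ω k))).toReal / Real.exp (birkhoff φ k ω - k * P) ∧
      (μ (cylinder A (wordPrefix ω k))).toReal / Real.exp (birkhoff φ k ω - k * P) ≤ c

/-- `φ` is Hölder continuous with respect to the metric `d(ω,υ) = 2^{-(ω ∧ υ)}`:
there are `C` and an exponent `s > 0` with `|φ(ω) − φ(υ)| ≤ C ⬝ d(ω,υ)^s`, i.e.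
`|φ(ω) − φ(υ)| ≤ C ⬝ 2^{-sn}` whenever `ω` and `υ` agree in their first `n` coordinates. -/
def HolderCont {A : Matrix (Fin l) (Fin l) ℕ} (φ : SigmaA l A → ℝ) : Prop :=
  ∃ C s : ℝ, 0 < s ∧ ∀ (ω υ : SigmaA l A) (n : ℕ),
    (∀ i < n, ω.1 i = υ.1 i) → |φ ω - φ υ| ≤ C * (2 : ℝ) ^ (-(s * n))

lemma measurableSet_cylinder (A : Matrix (Fin l) (Fin l) ℕ) (x : List (Fin l)) :
    MeasurableSet (cylinder A x) := by
  have h : cylinder A x = ⋂ i : Fin x.length,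
      (fun ω : SigmaA l A => ω.1 i.1) ⁻¹' {x[i.1]'i.2} := by
    ext ω
    simp only [cylinder, Set.mem_setOf_eq, Set.mem_iInter, Set.mem_preimage,
      Set.mem_singleton_iff]
    exact ⟨fun h i => h i.1 i.2, fun h i hi => h ⟨i, hi⟩⟩
  rw [h]
  exact MeasurableSet.iInter fun i =>
    ((measurable_pi_apply i.1).comp measurable_subtype_coe) (measurableSet_singleton _)

/-- `α(x)`: the number of children of the word `x` (the row sum of `A` at the
last letter of `x`). -/
def alpha (A : Matrix (Fin l) (Fin l) ℕ) (x : List (Fin l)) : ℕ :=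
  match x.getLast? with
  | some a => ∑ i, A a i
  | none => 0

/-- The `m`-th child `x θ_x⁻¹(m)` of the word `x`, the ordering of the children
being given by `θinv x`. -/
def child (θinv : List (Fin l) → ℕ → Fin l) (x : List (Fin l)) (m : ℕ) : List (Fin l) :=
  x ++ [θinv x m]

/-- The characteristic function of the cylinder `[x]`, as an element of `L²(μ)`. -/
noncomputable def cylLp (A : Matrix (Fin l) (Fin l) ℕ) (μ : Measure (SigmaA l A))
    [IsFiniteMeasure μ] (x : List (Fin l)) : Lp ℂ 2 μ :=
  indicatorConstLp 2 (measurableSet_cylinder A x) (measure_ne_top μ _) (1 : ℂ)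

/-- The Haar function `e_{x,j} = ∑_m μ([xθ_x⁻¹(m)])^{-1/2} ⟨f_{x,m}, U_x f_{x,j}⟩_x χ_{[xθ_x⁻¹(m)]}`
as an element of `L²(μ)`; here `u x m j = ⟨f_{x,m}, U_x f_{x,j}⟩_x` are the matrix
coefficients of `U_x` in the orthonormal basis `(f_{x,m})_m`. -/
noncomputable def haarLp (A : Matrix (Fin l) (Fin l) ℕ) (μ : Measure (SigmaA l A))
    [IsFiniteMeasure μ] (θinv : List (Fin l) → ℕ → Fin l) (u : List (Fin l) → ℕ → ℕ → ℝ)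
    (x : List (Fin l)) (j : ℕ) : Lp ℂ 2 μ :=
  ∑ m ∈ Finset.range (alpha A x),
    ((((Real.sqrt ((μ (cylinder A (child θinv x m))).toReal))⁻¹ * u x m j : ℝ) : ℂ)) •
      cylLp A μ (child θinv x m)

/-- The Haar family `𝓗`: the functions `e_{x,j}` for admissible `x` and
`1 ≤ j ≤ α(x) − 1` (here indexed by `0 ≤ j < α(x) − 1`), together with the
normalised characteristic functions `μ([a])^{-1/2} χ_{[a]}` of the length-one cylinders. -/
noncomputable def haarSet (A : Matrix (Fin l) (Fin l) ℕ) (μ : Measure (SigmaA l A))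
    [IsFiniteMeasure μ] (θinv : List (Fin l) → ℕ → Fin l) (u : List (Fin l) → ℕ → ℕ → ℝ) :
    Set (Lp ℂ 2 μ) :=
  {f | ∃ x j, Admissible A x ∧ j + 1 < alpha A x ∧ f = haarLp A μ θinv u x j} ∪
    {f | ∃ a : Fin l,
      f = (((Real.sqrt ((μ (cylinder A [a])).toReal))⁻¹ : ℝ) : ℂ) • cylLp A μ [a]}

section Aux
variable {A : Matrix (Fin l) (Fin l) ℕ}

lemma cylinder_anti {x y : List (Fin l)} (h : x <+: y) : cylinder A y ⊆ cylinder A x :=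
  fun ω hω i hi => by rw [h.getElem hi]; exact hω i (lt_of_lt_of_le hi h.length_le)

lemma cylinder_disjoint {x y : List (Fin l)} {i : ℕ} (hix : i < x.length) (hiy : i < y.length)
    (hne : x[i]'hix ≠ y[i]'hiy) : cylinder A x ∩ cylinder A y = ∅ := by
  ext ω
  simp only [Set.mem_inter_iff, Set.mem_empty_iff_false, iff_false]
  rintro ⟨h1, h2⟩
  exact hne ((h1 i hix).symm.trans (h2 i hiy))

lemma prefix_or_disjoint (x y : List (Fin l)) (hlen : x.length ≤ y.length) :
    x <+: y ∨ cylinder A x ∩ cylinder A y = ∅ := by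
  by_cases h : ∀ (i : ℕ) (hi : i < x.length), x[i]'hi = y[i]'(lt_of_lt_of_le hi hlen)
  · left
    rw [List.prefix_iff_eq_take]
    refine List.ext_getElem (by simp [hlen]) fun n h1 h2 => ?_
    rw [List.getElem_take]
    exact h n h1
  · right
    push_neg at h
    obtain ⟨i, hi, hne⟩ := h
    exact cylinder_disjoint hi (lt_of_lt_of_le hi hlen) hne

lemma mem_cylinder_append {x : List (Fin l)} {b : Fin l} {ω : SigmaA l A} :
    ω ∈ cylinder A (x ++ [b]) ↔ ω ∈ cylinder A x ∧ ω.1 x.length = b := by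
  constructor
  · intro h
    refine ⟨fun i hi => ?_, ?_⟩
    · have := h i (by simp; omega)
      rwa [List.getElem_append_left hi] at this
    · have := h x.length (by simp)
      rw [this, List.getElem_append_right (le_refl x.length), List.getElem_singleton]
  · rintro ⟨h1, h2⟩ i hi
    simp only [List.length_append, List.length_singleton] at hi
    rcases lt_or_eq_of_le (Nat.lt_succ_iff.mp hi) with h' | h'
    · rw [List.getElem_append_left h']
      exact h1 i h'
    · subst h'
      rw [List.getElem_append_right (le_refl x.length), List.getElem_singleton]
      exact h2

lemma getLast_of_mem_cylinder {x : List (Fin l)} (hne : x ≠ []) {ω : SigmaA l A}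
    (hω : ω ∈ cylinder A x) : A (x.getLast hne) (ω.1 x.length) = 1 := by
  have hlen : 0 < x.length := List.length_pos_iff.mpr hne
  have h1 : ω.1 (x.length - 1) = x.getLast hne := by
    rw [List.getLast_eq_getElem]
    exact hω _ (by omega)
  have := ω.2 (x.length - 1)
  rwa [h1, Nat.sub_add_cancel hlen] at this

lemma admissible_append {x : List (Fin l)} (hx : Admissible A x) {b : Fin l}
    (hb : A (x.getLast hx.1) b = 1) : Admissible A (x ++ [b]) := by
  refine ⟨by simp, fun i hi => ?_⟩
  simp only [List.length_append, List.length_singleton] at hi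
  rcases lt_or_eq_of_le (Nat.lt_succ_iff.mp hi) with h' | h'
  · rw [List.getElem_append_left h', List.getElem_append_left (by omega)]
    exact hx.2 i h'
  · have hi0 : i < x.length := by omega
    have e1 : (x ++ [b])[i]'(by simp; omega) = x.getLast hx.1 := by
      rw [List.getElem_append_left hi0, List.getLast_eq_getElem]
      congr 1
      omega
    have e2 : (x ++ [b])[i+1]'(by simp; omega) = b := by
      rw [List.getElem_append_right (by omega), List.getElem_singleton]
    rw [e1, e2]
    exact hb

lemma exists_next (hA : Primitive A) (a : Fin l) : ∃ b, A a b = 1 := by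
  obtain ⟨hA0, n, hn, hpos⟩ := hA
  by_contra h
  push_neg at h
  have hz : ∀ b, A a b = 0 := fun b => (hA0 a b).resolve_right (h b)
  obtain ⟨k, rfl⟩ : ∃ k, n = k + 1 := ⟨n - 1, by omega⟩
  have : (A ^ (k + 1)) a a = 0 := by
    rw [pow_succ']
    rw [Matrix.mul_apply]
    simp [hz]
  exact absurd (hpos a a) (by omega)

end Aux

section Aux2
variable {A : Matrix (Fin l) (Fin l) ℕ}

noncomputable def nextLetter (hA : Primitive A) (a : Fin l) : Fin l :=
  (exists_next hA a).choose

lemma nextLetter_spec (hA : Primitive A) (a : Fin l) : A a (nextLetter hA a) = 1 :=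
  (exists_next hA a).choose_spec

noncomputable def extSeq (hA : Primitive A) (a : Fin l) : ℕ → Fin l
  | 0 => a
  | n + 1 => nextLetter hA (extSeq hA a n)

lemma exists_mem_cylinder (hA : Primitive A) {x : List (Fin l)} (hx : Admissible A x) :
    ∃ ω : SigmaA l A, ω ∈ cylinder A x := by
  classical
  have hne := hx.1
  have hlen : 0 < x.length := List.length_pos_iff.mpr hne
  set a := x.getLast hne with ha
  refine ⟨⟨fun i => if h : i < x.length then x[i]'h else extSeq hA a (i + 1 - x.length), ?_⟩,
    fun i hi => by simp [hi]⟩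
  intro k
  by_cases h1 : k + 1 < x.length
  · simp only [dif_pos h1, dif_pos (by omega : k < x.length)]
    exact hx.2 k h1
  · by_cases h2 : k + 1 = x.length
    · have hk : k < x.length := by omega
      simp only [dif_pos hk, dif_neg (by omega : ¬ k + 1 < x.length)]
      have e1 : x[k]'hk = a := by
        rw [ha, List.getLast_eq_getElem]
        congr 1
        omega
      have e2 : k + 1 + 1 - x.length = 1 := by omega
      rw [e1, e2]
      exact nextLetter_spec hA a
    · have hk : ¬ k < x.length := by omega
      simp only [dif_neg hk, dif_neg (by omega : ¬ k + 1 < x.length)]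
      have e2 : k + 1 + 1 - x.length = (k + 1 - x.length) + 1 := by omega
      rw [e2]
      exact nextLetter_spec hA _

lemma wordPrefix_eq_of_mem_cylinder {x : List (Fin l)} {ω : SigmaA l A}
    (hω : ω ∈ cylinder A x) : wordPrefix ω x.length = x := by
  refine List.ext_getElem (by simp [wordPrefix]) fun n h1 h2 => ?_
  simp only [wordPrefix, List.getElem_ofFn]
  exact hω n h2

lemma measure_cylinder_pos (hA : Primitive A) {φ : SigmaA l A → ℝ} {P : ℝ}
    {μ : Measure (SigmaA l A)} (hG : IsGibbs φ P μ) {x : List (Fin l)}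
    (hx : Admissible A x) : 0 < (μ (cylinder A x)).toReal := by
  obtain ⟨ω, hω⟩ := exists_mem_cylinder hA hx
  obtain ⟨c, hc, hG⟩ := hG
  have hlen : 0 < x.length := List.length_pos_iff.mpr hx.1
  have h := (hG ω x.length hlen).1
  rw [wordPrefix_eq_of_mem_cylinder hω] at h
  have hcpos : (0:ℝ) < c⁻¹ := by positivity
  have hexp : (0:ℝ) < Real.exp (birkhoff φ x.length ω - x.length * P) := Real.exp_pos _
  rcases div_pos_iff.mp (lt_of_lt_of_le hcpos h) with ⟨h1, _⟩ | ⟨_, h2⟩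
  · exact h1
  · linarith

end Aux2


section Aux3
variable {A : Matrix (Fin l) (Fin l) ℕ} {θinv : List (Fin l) → ℕ → Fin l}

lemma alpha_eq {x : List (Fin l)} (hne : x ≠ []) :
    alpha A x = ∑ i, A (x.getLast hne) i := by
  simp [alpha, List.getLast?_eq_getLast hne]

lemma alpha_pos (hA : Primitive A) {x : List (Fin l)} (hne : x ≠ []) : 0 < alpha A x := by
  obtain ⟨b, hb⟩ := exists_next hA (x.getLast hne)
  rw [alpha_eq hne]
  exact Finset.sum_pos' (fun i _ => Nat.zero_le _) ⟨b, Finset.mem_univ b, by omega⟩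

lemma child_admissible {x : List (Fin l)} (hx : Admissible A x)
    (hθ : Set.BijOn (θinv x) (Set.Iio (alpha A x)) {y : Fin l | A (x.getLast hx.1) y = 1})
    {m : ℕ} (hm : m < alpha A x) : Admissible A (child θinv x m) :=
  admissible_append hx (hθ.mapsTo hm)

lemma cylinder_empty_of_not_admissible (hA0 : ∀ i j, A i j = 0 ∨ A i j = 1)
    {x : List (Fin l)} (hne : x ≠ []) (hx : ¬ Admissible A x) : cylinder A x = ∅ := by
  rw [Set.eq_empty_iff_forall_notMem]
  intro ω hω
  apply hx
  refine ⟨hne, fun i hi => ?_⟩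
  have h1 := hω i (by omega)
  have h2 := hω (i + 1) hi
  have := ω.2 i
  rwa [h1, h2] at this

lemma mem_child_iff {x : List (Fin l)} {m : ℕ} {ω : SigmaA l A} :
    ω ∈ cylinder A (child θinv x m) ↔ ω ∈ cylinder A x ∧ ω.1 x.length = θinv x m :=
  mem_cylinder_append

lemma children_disjoint {x : List (Fin l)} (hx : Admissible A x)
    (hθ : Set.BijOn (θinv x) (Set.Iio (alpha A x)) {y : Fin l | A (x.getLast hx.1) y = 1})
    {m m' : ℕ} (hm : m < alpha A x) (hm' : m' < alpha A x) (hne : m ≠ m') :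
    cylinder A (child θinv x m) ∩ cylinder A (child θinv x m') = ∅ := by
  rw [Set.eq_empty_iff_forall_notMem]
  rintro ω ⟨h1, h2⟩
  rw [mem_child_iff] at h1 h2
  exact hne (hθ.injOn hm hm' (h1.2.symm.trans h2.2))

lemma exists_child_of_mem {x : List (Fin l)} (hx : Admissible A x)
    (hθ : Set.BijOn (θinv x) (Set.Iio (alpha A x)) {y : Fin l | A (x.getLast hx.1) y = 1})
    {ω : SigmaA l A} (hω : ω ∈ cylinder A x) :
    ∃ m < alpha A x, ω ∈ cylinder A (child θinv x m) := by
  obtain ⟨m, hm, hmb⟩ := hθ.surjOn (getLast_of_mem_cylinder hx.1 hω)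
  exact ⟨m, hm, mem_child_iff.mpr ⟨hω, hmb.symm⟩⟩

lemma sum_indicator_children {x : List (Fin l)} (hx : Admissible A x)
    (hθ : Set.BijOn (θinv x) (Set.Iio (alpha A x)) {y : Fin l | A (x.getLast hx.1) y = 1})
    (ω : SigmaA l A) :
    ∑ m ∈ Finset.range (alpha A x),
        (cylinder A (child θinv x m)).indicator (fun _ => (1 : ℂ)) ω
      = (cylinder A x).indicator (fun _ => (1 : ℂ)) ω := by
  by_cases hω : ω ∈ cylinder A x
  · obtain ⟨m₀, hm₀, hc₀⟩ := exists_child_of_mem hx hθ hω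
    rw [Set.indicator_of_mem hω, Finset.sum_eq_single m₀]
    · rw [Set.indicator_of_mem hc₀]
    · intro m hm hne
      rw [Set.indicator_of_notMem]
      intro hc
      have := children_disjoint hx hθ (Finset.mem_range.mp hm) hm₀ hne
      rw [Set.eq_empty_iff_forall_notMem] at this
      exact this ω ⟨hc, hc₀⟩
    · intro h
      exact absurd (Finset.mem_range.mpr hm₀) h
  · rw [Set.indicator_of_notMem hω]
    refine Finset.sum_eq_zero fun m _ => Set.indicator_of_notMem (fun hc => ?_) _
    exact hω (mem_child_iff.mp hc).1

end Aux3

/-! ### Auxiliary lemmas -/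

local notation "⟪" f ", " g "⟫" => @inner ℂ _ _ f g

section AuxL2
variable {A : Matrix (Fin l) (Fin l) ℕ} {μ : Measure (SigmaA l A)} [IsFiniteMeasure μ]
  {θinv : List (Fin l) → ℕ → Fin l} {u : List (Fin l) → ℕ → ℕ → ℝ}

lemma inner_cylLp (x y : List (Fin l)) :
    ⟪cylLp A μ x, cylLp A μ y⟫ = ((μ (cylinder A x ∩ cylinder A y)).toReal : ℂ) := by
  rw [cylLp, cylLp, L2.inner_indicatorConstLp_one (measurableSet_cylinder A x) (measure_ne_top μ _)]
  rw [setIntegral_congr_ae (measurableSet_cylinder A x)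
    ((indicatorConstLp_coeFn (p := 2) (hs := measurableSet_cylinder A y)
      (hμs := measure_ne_top μ _) (c := (1:ℂ))).mono fun ω h _ => h)]
  rw [setIntegral_indicator (measurableSet_cylinder A y), setIntegral_const]
  simp
  rfl

lemma inner_cylLp_haarLp (z y : List (Fin l)) (j : ℕ) :
    ⟪cylLp A μ z, haarLp A μ θinv u y j⟫
      = (((∑ m ∈ Finset.range (alpha A y),
          (Real.sqrt ((μ (cylinder A (child θinv y m))).toReal))⁻¹ * u y m j
            * (μ (cylinder A z ∩ cylinder A (child θinv y m))).toReal : ℝ)) : ℂ) := by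
  rw [haarLp, inner_sum, Complex.ofReal_sum]
  refine Finset.sum_congr rfl fun m _ => ?_
  rw [inner_smul_right, inner_cylLp]
  push_cast
  ring

lemma inner_cylLp_haarLp_zero
    (hpos : ∀ x, Admissible A x → 0 < (μ (cylinder A x)).toReal)
    {y : List (Fin l)} (hy : Admissible A y)
    (hθy : Set.BijOn (θinv y) (Set.Iio (alpha A y)) {b : Fin l | A (y.getLast hy.1) b = 1})
    {j : ℕ}
    (horth : ∑ m ∈ Finset.range (alpha A y), u y m (alpha A y - 1) * u y m j = 0)
    (hlast : ∀ m < alpha A y, u y m (alpha A y - 1) =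
      (Real.sqrt ((μ (cylinder A y)).toReal))⁻¹ *
        Real.sqrt ((μ (cylinder A (child θinv y m))).toReal))
    {z : List (Fin l)}
    (hcase : cylinder A y ⊆ cylinder A z ∨ cylinder A z ∩ cylinder A y = ∅) :
    ⟪cylLp A μ z, haarLp A μ θinv u y j⟫ = 0 := by
  rw [inner_cylLp_haarLp]
  rw [Complex.ofReal_eq_zero]
  rcases hcase with hsub | hdisj
  · have hty : 0 < (μ (cylinder A y)).toReal := hpos y hy
    calc ∑ m ∈ Finset.range (alpha A y),
          (Real.sqrt ((μ (cylinder A (child θinv y m))).toReal))⁻¹ * u y m j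
            * (μ (cylinder A z ∩ cylinder A (child θinv y m))).toReal
        = ∑ m ∈ Finset.range (alpha A y),
            Real.sqrt ((μ (cylinder A y)).toReal) * (u y m (alpha A y - 1) * u y m j) := by
          refine Finset.sum_congr rfl fun m hm => ?_
          have hm' := Finset.mem_range.mp hm
          have hcm : 0 < (μ (cylinder A (child θinv y m))).toReal :=
            hpos _ (child_admissible hy hθy hm')
          have hic : cylinder A z ∩ cylinder A (child θinv y m)
              = cylinder A (child θinv y m) :=
            Set.inter_eq_self_of_subset_right
              (((cylinder_anti (List.prefix_append y _)).trans hsub))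
          rw [hic, hlast m hm']
          set s := Real.sqrt ((μ (cylinder A (child θinv y m))).toReal) with hs_def
          set t := Real.sqrt ((μ (cylinder A y)).toReal) with ht_def
          have hX : (μ (cylinder A (child θinv y m))).toReal = s * s := by
            rw [hs_def]; exact (Real.mul_self_sqrt hcm.le).symm
          have hs0 : s ≠ 0 := by rw [hs_def]; positivity
          have ht0 : t ≠ 0 := by rw [ht_def]; positivity
          rw [hX]
          field_simp
      _ = 0 := by rw [← Finset.mul_sum, horth, mul_zero]
  · refine Finset.sum_eq_zero fun m hm => ?_
    have : cylinder A z ∩ cylinder A (child θinv y m) = ∅ := by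
      rw [Set.eq_empty_iff_forall_notMem]
      rintro ω ⟨h1, h2⟩
      have : ω ∈ cylinder A z ∩ cylinder A y :=
        ⟨h1, cylinder_anti (List.prefix_append y _) h2⟩
      rw [hdisj] at this
      exact this
    rw [this]
    simp

lemma inner_haarLp_haarLp
    (hpos : ∀ x, Admissible A x → 0 < (μ (cylinder A x)).toReal)
    {x : List (Fin l)} (hx : Admissible A x)
    (hθx : Set.BijOn (θinv x) (Set.Iio (alpha A x)) {b : Fin l | A (x.getLast hx.1) b = 1})
    (j j' : ℕ) :
    ⟪haarLp A μ θinv u x j, haarLp A μ θinv u x j'⟫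
      = ((∑ m ∈ Finset.range (alpha A x), u x m j * u x m j' : ℝ) : ℂ) := by
  rw [haarLp, sum_inner, Complex.ofReal_sum]
  refine Finset.sum_congr rfl fun m hm => ?_
  have hm' := Finset.mem_range.mp hm
  have hcm : 0 < (μ (cylinder A (child θinv x m))).toReal :=
    hpos _ (child_admissible hx hθx hm')
  rw [inner_smul_left, inner_cylLp_haarLp, Complex.conj_ofReal]
  rw [← Complex.ofReal_mul]
  rw [Complex.ofReal_inj]
  rw [Finset.sum_eq_single m]
  · set s := Real.sqrt ((μ (cylinder A (child θinv x m))).toReal) with hs_def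
    have hX : (μ (cylinder A (child θinv x m) ∩ cylinder A (child θinv x m))).toReal
        = s * s := by
      rw [Set.inter_self, hs_def]; exact (Real.mul_self_sqrt hcm.le).symm
    have hs0 : s ≠ 0 := by rw [hs_def]; positivity
    rw [hX]
    field_simp
  · intro m' hm'' hne
    have : cylinder A (child θinv x m) ∩ cylinder A (child θinv x m') = ∅ :=
      children_disjoint hx hθx hm' (Finset.mem_range.mp hm'') (fun h => hne h.symm)
    rw [this]
    simp
  · intro h
    exact absurd hm h

lemma coeFn_sum_ae {ι : Type*} (s : Finset ι) (f : ι → Lp ℂ 2 μ) :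
    ⇑(∑ i ∈ s, f i) =ᵐ[μ] fun ω => ∑ i ∈ s, (f i : SigmaA l A → ℂ) ω := by
  classical
  induction s using Finset.cons_induction with
  | empty => simp only [Finset.sum_empty]; exact Lp.coeFn_zero ℂ 2 μ
  | cons a s ha ih =>
      rw [Finset.sum_cons]
      refine (Lp.coeFn_add _ _).trans ?_
      filter_upwards [ih] with ω hω
      simp only [Pi.add_apply, hω, Finset.sum_cons]

lemma cylLp_sum_children {x : List (Fin l)} (hx : Admissible A x)
    (hθx : Set.BijOn (θinv x) (Set.Iio (alpha A x)) {b : Fin l | A (x.getLast hx.1) b = 1}) :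
    cylLp A μ x = ∑ m ∈ Finset.range (alpha A x), cylLp A μ (child θinv x m) := by
  refine Lp.ext ?_
  have h2 := coeFn_sum_ae (μ := μ) (Finset.range (alpha A x)) (fun m => cylLp A μ (child θinv x m))
  have h3 : ∀ᵐ ω ∂μ, ∀ m ∈ Finset.range (alpha A x),
      (cylLp A μ (child θinv x m) : SigmaA l A → ℂ) ω
        = (cylinder A (child θinv x m)).indicator (fun _ => (1:ℂ)) ω := by
    refine (Filter.eventually_all_finset _).mpr fun m _ => indicatorConstLp_coeFn
  filter_upwards [indicatorConstLp_coeFn (p := 2) (hs := measurableSet_cylinder A x)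
    (hμs := measure_ne_top μ _) (c := (1:ℂ)), h2, h3] with ω hω1 hω2 hω3
  rw [cylLp, hω1, hω2, Finset.sum_congr rfl hω3]
  exact (sum_indicator_children hx hθx ω).symm

lemma row_orth {x : List (Fin l)}
    (hu_orth_x : ∀ j < alpha A x, ∀ j' < alpha A x,
      ∑ m ∈ Finset.range (alpha A x), u x m j * u x m j' = if j = j' then 1 else 0) :
    ∀ m < alpha A x, ∀ m' < alpha A x,
      ∑ j ∈ Finset.range (alpha A x), u x m j * u x m' j = if m = m' then 1 else 0 := by
  classical
  have h1 : (Matrix.of fun a b : Fin (alpha A x) => u x (b : ℕ) (a : ℕ)) *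
      (Matrix.of fun a b : Fin (alpha A x) => u x (a : ℕ) (b : ℕ)) = 1 := by
    ext j j'
    rw [Matrix.mul_apply]
    simp only [Matrix.of_apply, Matrix.one_apply]
    rw [Fin.sum_univ_eq_sum_range (fun k => u x k j * u x k j') (alpha A x)]
    rw [hu_orth_x j j.2 j' j'.2]
    simp [Fin.ext_iff]
  have h2 := mul_eq_one_comm.mp h1
  intro m hm m' hm'
  have h3 := congrFun (congrFun h2 ⟨m, hm⟩) ⟨m', hm'⟩
  rw [Matrix.mul_apply] at h3
  simp only [Matrix.of_apply, Matrix.one_apply] at h3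
  rw [Fin.sum_univ_eq_sum_range (fun k => u x m k * u x m' k) (alpha A x)] at h3
  rw [h3]
  simp [Fin.ext_iff]

lemma haarLp_eq_sum {x : List (Fin l)} (j : ℕ) :
    haarLp A μ θinv u x j = ∑ m ∈ Finset.range (alpha A x),
      ((((Real.sqrt ((μ (cylinder A (child θinv x m))).toReal))⁻¹ * u x m j : ℝ) : ℂ)) •
        cylLp A μ (child θinv x m) := rfl

lemma cylLp_child_mem_span
    (hpos : ∀ x, Admissible A x → 0 < (μ (cylinder A x)).toReal)
    {x : List (Fin l)} (hx : Admissible A x)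
    (hθx : Set.BijOn (θinv x) (Set.Iio (alpha A x)) {b : Fin l | A (x.getLast hx.1) b = 1})
    (hu_orth_x : ∀ j < alpha A x, ∀ j' < alpha A x,
      ∑ m ∈ Finset.range (alpha A x), u x m j * u x m j' = if j = j' then 1 else 0)
    (hu_last_x : ∀ m < alpha A x, u x m (alpha A x - 1) =
      (Real.sqrt ((μ (cylinder A x)).toReal))⁻¹ *
        Real.sqrt ((μ (cylinder A (child θinv x m))).toReal))
    {m : ℕ} (hm : m < alpha A x)
    (hmem : cylLp A μ x ∈ Submodule.span ℂ (haarSet A μ θinv u)) :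
    cylLp A μ (child θinv x m) ∈ Submodule.span ℂ (haarSet A μ θinv u) := by
  classical
  set S := Submodule.span ℂ (haarSet A μ θinv u) with hS
  set α := alpha A x with hα
  have hx0 : 0 < (μ (cylinder A x)).toReal := hpos x hx
  have hcpos : ∀ m' < α, 0 < (μ (cylinder A (child θinv x m'))).toReal :=
    fun m' hm' => hpos _ (child_admissible hx hθx hm')
  set g : ℕ → Lp ℂ 2 μ := fun j =>
    if j + 1 < α then haarLp A μ θinv u x j
    else (((Real.sqrt ((μ (cylinder A x)).toReal))⁻¹ : ℝ) : ℂ) • cylLp A μ x with hg_def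
  have hgS : ∀ j, g j ∈ S := by
    intro j
    simp only [hg_def]
    by_cases hj : j + 1 < α
    · rw [if_pos hj]
      exact Submodule.subset_span (Or.inl ⟨x, j, hx, hj, rfl⟩)
    · rw [if_neg hj]
      exact Submodule.smul_mem _ _ hmem
  have hg_eq : ∀ j < α, g j = ∑ m' ∈ Finset.range α,
      ((((Real.sqrt ((μ (cylinder A (child θinv x m'))).toReal))⁻¹ * u x m' j : ℝ) : ℂ)) •
        cylLp A μ (child θinv x m') := by
    intro j hj
    simp only [hg_def]
    by_cases hjlt : j + 1 < α
    · rw [if_pos hjlt]; rfl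
    · rw [if_neg hjlt]
      have hj_eq : j = α - 1 := by omega
      subst hj_eq
      rw [cylLp_sum_children hx hθx, Finset.smul_sum]
      refine Finset.sum_congr rfl fun m' hm' => ?_
      have hm'' := Finset.mem_range.mp hm'
      congr 1
      rw [hu_last_x m' hm'']
      have hs0 : Real.sqrt ((μ (cylinder A (child θinv x m'))).toReal) ≠ 0 := by
        have := hcpos m' hm''
        positivity
      refine congrArg Complex.ofReal ?_
      rw [mul_comm ((Real.sqrt ((μ (cylinder A x)).toReal))⁻¹)
        (Real.sqrt ((μ (cylinder A (child θinv x m'))).toReal)), ← mul_assoc,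
        inv_mul_cancel₀ hs0, one_mul]
  have key : cylLp A μ (child θinv x m)
      = ((Real.sqrt ((μ (cylinder A (child θinv x m))).toReal) : ℝ) : ℂ) •
          ∑ j ∈ Finset.range α, ((u x m j : ℝ) : ℂ) • g j := by
    have expand : ∑ j ∈ Finset.range α, ((u x m j : ℝ) : ℂ) • g j
        = ∑ m' ∈ Finset.range α,
            (((Real.sqrt ((μ (cylinder A (child θinv x m'))).toReal))⁻¹ *
              ∑ j ∈ Finset.range α, u x m j * u x m' j : ℝ) : ℂ) •
                cylLp A μ (child θinv x m') := by
      rw [Finset.sum_congr rfl (fun j hj => by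
        rw [hg_eq j (Finset.mem_range.mp hj), Finset.smul_sum])]
      rw [Finset.sum_comm]
      refine Finset.sum_congr rfl fun m' _ => ?_
      simp only [smul_smul]
      rw [← Finset.sum_smul]
      congr 1
      push_cast
      rw [Finset.mul_sum]
      exact Finset.sum_congr rfl fun j _ => by ring
    rw [expand, Finset.sum_eq_single m]
    · have hrow := row_orth (u := u) hu_orth_x m hm m hm
      rw [if_pos rfl] at hrow
      rw [hrow, smul_smul]
      have hs0 : Real.sqrt ((μ (cylinder A (child θinv x m))).toReal) ≠ 0 := by
        have := hcpos m hm
        positivity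
      rw [show ((Real.sqrt ((μ (cylinder A (child θinv x m))).toReal) : ℝ) : ℂ) *
          (((Real.sqrt ((μ (cylinder A (child θinv x m))).toReal))⁻¹ * 1 : ℝ) : ℂ) = 1 by
        push_cast
        rw [mul_one, mul_inv_cancel₀ (Complex.ofReal_ne_zero.mpr hs0)]]
      rw [one_smul]
    · intro m' hm' hne
      have hrow := row_orth (u := u) hu_orth_x m hm m' (Finset.mem_range.mp hm')
      rw [if_neg (fun h => hne h.symm)] at hrow
      rw [hrow]
      simp
    · intro h
      exact absurd (Finset.mem_range.mpr hm) h
  rw [key]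
  exact Submodule.smul_mem _ _ (Submodule.sum_mem _ fun j _ => Submodule.smul_mem _ _ (hgS j))

lemma admissible_singleton (a : Fin l) : Admissible A [a] :=
  ⟨by simp, fun i hi => by simp at hi⟩

lemma admissible_of_append {y : List (Fin l)} {b : Fin l}
    (h : Admissible A (y ++ [b])) (hy : y ≠ []) : Admissible A y := by
  refine ⟨hy, fun i hi => ?_⟩
  have h2 := h.2 i (by simp; omega)
  rwa [List.getElem_append_left (by omega), List.getElem_append_left hi] at h2

lemma last_transition_of_append {y : List (Fin l)} {b : Fin l}
    (h : Admissible A (y ++ [b])) (hy : y ≠ []) : A (y.getLast hy) b = 1 := by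
  have hlen : 0 < y.length := List.length_pos_iff.mpr hy
  have h2 := h.2 (y.length - 1) (by simp; omega)
  have e1 : (y ++ [b])[y.length - 1]'(by simp) = y.getLast hy := by
    rw [List.getElem_append_left (by omega)]
    exact (List.getLast_eq_getElem hy).symm
  have e2 : (y ++ [b])[y.length - 1 + 1]'(by simp; omega) = b := by
    rw [List.getElem_append_right (by omega)]
    simp
  rw [e1, e2] at h2
  exact h2

lemma cylLp_zero_of_empty {x : List (Fin l)} (h : cylinder A x = ∅) :
    cylLp A μ x = 0 := by
  refine Lp.ext ?_
  refine (indicatorConstLp_coeFn (p := 2) (hs := measurableSet_cylinder A x)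
    (hμs := measure_ne_top μ _) (c := (1:ℂ))).trans ?_
  filter_upwards [Lp.coeFn_zero ℂ 2 μ] with ω hω
  rw [hω, h]
  simp

lemma cylLp_mem_span (hA : Primitive A)
    (hpos : ∀ x, Admissible A x → 0 < (μ (cylinder A x)).toReal)
    (hθ : ∀ (x : List (Fin l)) (hx : Admissible A x),
      Set.BijOn (θinv x) (Set.Iio (alpha A x)) {y : Fin l | A (x.getLast hx.1) y = 1})
    (hu_orth : ∀ x, Admissible A x → ∀ j < alpha A x, ∀ j' < alpha A x,
      ∑ m ∈ Finset.range (alpha A x), u x m j * u x m j' = if j = j' then 1 else 0)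
    (hu_last : ∀ x, Admissible A x → ∀ m < alpha A x,
      u x m (alpha A x - 1) =
        (Real.sqrt ((μ (cylinder A x)).toReal))⁻¹ *
          Real.sqrt ((μ (cylinder A (child θinv x m))).toReal)) :
    ∀ x : List (Fin l), x ≠ [] → cylLp A μ x ∈ Submodule.span ℂ (haarSet A μ θinv u) := by
  intro x
  induction x using List.reverseRecOn with
  | nil => intro h; exact absurd rfl h
  | append_singleton y b ih =>
    intro _
    rcases eq_or_ne y [] with rfl | hy
    · -- singleton [b]
      simp only [List.nil_append]
      have hb : Admissible A [b] := admissible_singleton b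
      have hpos_b := hpos [b] hb
      have hsqrt : ((Real.sqrt ((μ (cylinder A [b])).toReal) : ℝ) : ℂ) *
          (((Real.sqrt ((μ (cylinder A [b])).toReal))⁻¹ : ℝ) : ℂ) = 1 := by
        have h0 : Real.sqrt ((μ (cylinder A [b])).toReal) ≠ 0 := by positivity
        push_cast
        exact mul_inv_cancel₀ (Complex.ofReal_ne_zero.mpr h0)
      have : cylLp A μ [b] = ((Real.sqrt ((μ (cylinder A [b])).toReal) : ℝ) : ℂ) •
          ((((Real.sqrt ((μ (cylinder A [b])).toReal))⁻¹ : ℝ) : ℂ) • cylLp A μ [b]) := by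
        rw [smul_smul, hsqrt, one_smul]
      rw [this]
      exact Submodule.smul_mem _ _
        (Submodule.subset_span (Or.inr ⟨b, rfl⟩))
    · by_cases hadm : Admissible A (y ++ [b])
      · have hy_adm : Admissible A y := admissible_of_append hadm hy
        have hbtrans : A (y.getLast hy) b = 1 := last_transition_of_append hadm hy
        have hθy := hθ y hy_adm
        obtain ⟨m, hm, hmb⟩ := hθy.surjOn (by
          show A (y.getLast hy_adm.1) b = 1
          exact hbtrans)
        have : (y ++ [b]) = child θinv y m := by
          rw [child, hmb]
        rw [this]
        exact cylLp_child_mem_span hpos hy_adm hθy (hu_orth y hy_adm) (hu_last y hy_adm)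
          hm (ih hy)
      · have : cylinder A (y ++ [b]) = ∅ :=
          cylinder_empty_of_not_admissible hA.1 (by simp) hadm
        rw [cylLp_zero_of_empty this]
        exact Submodule.zero_mem _

lemma measurable_coord_generateFrom (i : ℕ) :
    @Measurable (SigmaA l A) (Fin l)
      (MeasurableSpace.generateFrom {s | ∃ x : List (Fin l), s = cylinder A x}) _
      (fun ω => ω.1 i) := by
  letI m := MeasurableSpace.generateFrom {s | ∃ x : List (Fin l), s = cylinder A x}
  refine measurable_to_countable fun ω => ?_
  set b := ω.1 i with hb
  have : (fun ω' : SigmaA l A => ω'.1 i) ⁻¹' {b}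
      = ⋃ v : Fin i → Fin l, cylinder A (List.ofFn v ++ [b]) := by
    ext ω'
    simp only [Set.mem_preimage, Set.mem_singleton_iff, Set.mem_iUnion]
    constructor
    · intro h
      refine ⟨fun k => ω'.1 k, ?_⟩
      rw [mem_cylinder_append]
      constructor
      · intro k hk
        simp only [List.length_ofFn] at hk
        rw [List.getElem_ofFn]
      · simpa [List.length_ofFn] using h
    · rintro ⟨v, hv⟩
      rw [mem_cylinder_append] at hv
      simpa [List.length_ofFn] using hv.2
  rw [this]
  exact MeasurableSet.iUnion fun v =>
    MeasurableSpace.measurableSet_generateFrom ⟨List.ofFn v ++ [b], rfl⟩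

lemma subtype_val_measurable_generateFrom :
    @Measurable (SigmaA l A) (ℕ → Fin l)
      (MeasurableSpace.generateFrom {s | ∃ x : List (Fin l), s = cylinder A x}) _
      Subtype.val := by
  letI : MeasurableSpace (SigmaA l A) :=
    MeasurableSpace.generateFrom {s | ∃ x : List (Fin l), s = cylinder A x}
  exact measurable_pi_lambda _ (fun i => measurable_coord_generateFrom i)

lemma measurableSpace_eq :
    (inferInstance : MeasurableSpace (SigmaA l A)) =
      MeasurableSpace.generateFrom {s | ∃ x : List (Fin l), s = cylinder A x} := by
  refine le_antisymm ?_ (MeasurableSpace.generateFrom_le ?_)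
  · exact measurable_iff_comap_le.mp subtype_val_measurable_generateFrom
  · rintro s ⟨x, rfl⟩
    exact measurableSet_cylinder A x

lemma isPiSystem_cylinders :
    IsPiSystem {s : Set (SigmaA l A) | ∃ x : List (Fin l), s = cylinder A x} := by
  rintro s ⟨x, rfl⟩ t ⟨y, rfl⟩ hne
  rcases le_total x.length y.length with hlen | hlen
  · rcases prefix_or_disjoint (A := A) x y hlen with hpre | hdisj
    · exact ⟨y, by rw [Set.inter_eq_self_of_subset_right (cylinder_anti hpre)]⟩
    · rw [hdisj] at hne
      exact absurd hne (by simp)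
  · rcases prefix_or_disjoint (A := A) y x hlen with hpre | hdisj
    · exact ⟨x, by rw [Set.inter_eq_self_of_subset_left (cylinder_anti hpre)]⟩
    · rw [Set.inter_comm, hdisj] at hne
      exact absurd hne (by simp)

lemma smul_cylInd {s : Set (SigmaA l A)} (hs : MeasurableSet s) (c : ℂ) :
    indicatorConstLp 2 hs (measure_ne_top μ s) c
      = c • indicatorConstLp 2 hs (measure_ne_top μ s) (1 : ℂ) := by
  refine Lp.ext ?_
  refine (indicatorConstLp_coeFn).trans ?_
  filter_upwards [Lp.coeFn_smul c (indicatorConstLp 2 hs (measure_ne_top μ s) (1:ℂ)),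
    indicatorConstLp_coeFn (p := 2) (hs := hs) (hμs := measure_ne_top μ s) (c := (1:ℂ))]
    with ω h1 h2
  rw [h1]
  simp only [Pi.smul_apply, h2, smul_eq_mul]
  by_cases hω : ω ∈ s <;> simp [hω]

lemma indicator_univ_mem_span (hl : 2 ≤ l) (hA : Primitive A)
    (hmem : ∀ x : List (Fin l), x ≠ [] → cylLp A μ x ∈ Submodule.span ℂ (haarSet A μ θinv u)) :
    indicatorConstLp 2 MeasurableSet.univ (measure_ne_top μ _) (1 : ℂ)
      ∈ Submodule.span ℂ (haarSet A μ θinv u) := by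
  have huniv : indicatorConstLp 2 MeasurableSet.univ (measure_ne_top μ Set.univ) (1 : ℂ)
      = ∑ a : Fin l, cylLp A μ [a] := by
    refine Lp.ext ?_
    have h3 : ∀ᵐ ω ∂μ, ∀ a ∈ (Finset.univ : Finset (Fin l)),
        (cylLp A μ [a] : SigmaA l A → ℂ) ω
          = (cylinder A [a]).indicator (fun _ => (1:ℂ)) ω := by
      refine (Filter.eventually_all_finset _).mpr fun a _ => indicatorConstLp_coeFn
    filter_upwards [indicatorConstLp_coeFn (p := 2) (hs := MeasurableSet.univ)
      (hμs := measure_ne_top μ Set.univ) (c := (1:ℂ)),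
      coeFn_sum_ae (μ := μ) Finset.univ (fun a => cylLp A μ [a]), h3] with ω h1 h2 h3'
    rw [h1, h2]
    rw [Finset.sum_congr rfl h3']
    have hmemω : ∀ a : Fin l, ω ∈ cylinder A [a] ↔ ω.1 0 = a := by
      intro a
      constructor
      · intro h
        simpa using h 0 (by simp)
      · intro h i hi
        simp only [List.length_singleton] at hi
        interval_cases i
        simpa using h
    rw [Finset.sum_eq_single (ω.1 0)]
    · rw [Set.indicator_of_mem ((hmemω _).mpr rfl), Set.indicator_of_mem (Set.mem_univ ω)]
    · intro a _ hne
      rw [Set.indicator_of_notMem (fun h => hne ((hmemω a).mp h).symm)]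
    · intro h
      exact absurd (Finset.mem_univ _) h
  rw [huniv]
  exact Submodule.sum_mem _ fun a _ => hmem [a] (by simp)

lemma indicatorConstLp_set_congr {s t : Set (SigmaA l A)} (h : s = t)
    (hs : MeasurableSet s) (ht : MeasurableSet t) (c : ℂ) :
    indicatorConstLp 2 hs (measure_ne_top μ s) c
      = indicatorConstLp 2 ht (measure_ne_top μ t) c := by
  subst h
  rfl

lemma cylinder_nil_eq_univ : cylinder A ([] : List (Fin l)) = Set.univ := by
  ext ω
  simp [cylinder]

lemma indicator_mem_closure_span (hl : 2 ≤ l) (hA : Primitive A)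
    (hmem : ∀ x : List (Fin l), x ≠ [] → cylLp A μ x ∈ Submodule.span ℂ (haarSet A μ θinv u))
    {s : Set (SigmaA l A)} (hs : MeasurableSet s) :
    indicatorConstLp 2 hs (measure_ne_top μ s) (1 : ℂ)
      ∈ (Submodule.span ℂ (haarSet A μ θinv u)).topologicalClosure := by
  classical
  set Scl := (Submodule.span ℂ (haarSet A μ θinv u)).topologicalClosure with hScl
  have hspan_le : Submodule.span ℂ (haarSet A μ θinv u) ≤ Scl :=
    Submodule.le_topologicalClosure _
  have huniv : ∀ ht : MeasurableSet (Set.univ : Set (SigmaA l A)),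
      indicatorConstLp 2 ht (measure_ne_top μ _) (1 : ℂ) ∈ Scl :=
    fun ht => hspan_le (indicator_univ_mem_span hl hA hmem)
  have H : ∀ ⦃t : Set (SigmaA l A)⦄, MeasurableSet t →
      ∀ ht : MeasurableSet t, indicatorConstLp 2 ht (measure_ne_top μ t) (1 : ℂ) ∈ Scl := by
    refine MeasurableSpace.induction_on_inter (measurableSpace_eq (A := A))
      (isPiSystem_cylinders (A := A)) ?_ ?_ ?_ ?_
    · -- empty
      intro ht
      have : indicatorConstLp 2 ht (measure_ne_top μ ∅) (1 : ℂ) = 0 := indicatorConstLp_empty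
      rw [this]
      exact Submodule.zero_mem _
    · -- basic : cylinders
      rintro t ⟨x, rfl⟩ ht
      rcases eq_or_ne x [] with rfl | hx
      · rw [indicatorConstLp_set_congr (cylinder_nil_eq_univ (A := A)) ht MeasurableSet.univ]
        exact huniv _
      · have : indicatorConstLp 2 ht (measure_ne_top μ _) (1 : ℂ) = cylLp A μ x :=
          indicatorConstLp_set_congr rfl ht (measurableSet_cylinder A x) 1
        rw [this]
        exact hspan_le (hmem x hx)
    · -- compl
      intro t htm hC ht
      have hsub : indicatorConstLp 2 ht (measure_ne_top μ tᶜ) (1 : ℂ)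
          = indicatorConstLp 2 MeasurableSet.univ (measure_ne_top μ _) (1 : ℂ)
            - indicatorConstLp 2 htm (measure_ne_top μ t) (1 : ℂ) := by
        refine Lp.ext ?_
        filter_upwards [indicatorConstLp_coeFn (p := 2) (hs := ht)
            (hμs := measure_ne_top μ tᶜ) (c := (1:ℂ)),
          indicatorConstLp_coeFn (p := 2) (hs := (MeasurableSet.univ : MeasurableSet
            (Set.univ : Set (SigmaA l A)))) (hμs := measure_ne_top μ _) (c := (1:ℂ)),
          indicatorConstLp_coeFn (p := 2) (hs := htm) (hμs := measure_ne_top μ t) (c := (1:ℂ)),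
          Lp.coeFn_sub (indicatorConstLp 2 MeasurableSet.univ (measure_ne_top μ _) (1 : ℂ))
            (indicatorConstLp 2 htm (measure_ne_top μ t) (1 : ℂ))] with ω h1 h2 h3 h4
        rw [h1, h4]
        simp only [Pi.sub_apply, h2, h3]
        by_cases hω : ω ∈ t <;> simp [hω]
      rw [hsub]
      exact Submodule.sub_mem _ (huniv _) (hC htm)
    · -- disjoint countable union
      intro f hdisj hfm hC ht
      set t := ⋃ n, f n with htdef
      set SN : ℕ → Set (SigmaA l A) := fun N => ⋃ n ∈ Finset.range N, f n with hSN
      have hSNm : ∀ N, MeasurableSet (SN N) := fun N =>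
        (Finset.range N).measurableSet_biUnion (fun n _ => hfm n)
      have hSN_mem : ∀ N, indicatorConstLp 2 (hSNm N) (measure_ne_top μ _) (1 : ℂ) ∈ Scl := by
        intro N
        have : indicatorConstLp 2 (hSNm N) (measure_ne_top μ _) (1 : ℂ)
            = ∑ n ∈ Finset.range N, indicatorConstLp 2 (hfm n) (measure_ne_top μ _) (1 : ℂ) := by
          refine Lp.ext ?_
          have h3 : ∀ᵐ ω ∂μ, ∀ n ∈ Finset.range N,
              (indicatorConstLp 2 (hfm n) (measure_ne_top μ (f n)) (1:ℂ) : SigmaA l A → ℂ) ω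
                = (f n).indicator (fun _ => (1:ℂ)) ω := by
            refine (Filter.eventually_all_finset _).mpr fun n _ => indicatorConstLp_coeFn
          filter_upwards [indicatorConstLp_coeFn (p := 2) (hs := hSNm N)
              (hμs := measure_ne_top μ _) (c := (1:ℂ)),
            coeFn_sum_ae (μ := μ) (Finset.range N)
              (fun n => indicatorConstLp 2 (hfm n) (measure_ne_top μ _) (1 : ℂ)), h3]
            with ω h1 h2 h3'
          rw [h1, h2, Finset.sum_congr rfl h3']
          by_cases hω : ω ∈ SN N
          · rw [Set.indicator_of_mem hω]
            simp only [hSN, Set.mem_iUnion] at hω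
            obtain ⟨n₀, hn₀, hωn₀⟩ := hω
            rw [Finset.sum_eq_single n₀]
            · rw [Set.indicator_of_mem hωn₀]
            · intro n hn hne
              refine Set.indicator_of_notMem (fun hωn => ?_) _
              exact (hdisj hne).le_bot ⟨hωn, hωn₀⟩
            · intro h; exact absurd hn₀ h
          · rw [Set.indicator_of_notMem hω]
            refine (Finset.sum_eq_zero fun n hn => Set.indicator_of_notMem (fun hωn => ?_) _).symm
            exact hω (Set.mem_biUnion hn hωn)
        rw [this]
        exact Submodule.sum_mem _ fun n _ => hC n (hfm n)
      -- convergence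
      have hdiff : ∀ N, indicatorConstLp 2 ht (measure_ne_top μ t) (1 : ℂ)
          - indicatorConstLp 2 (hSNm N) (measure_ne_top μ _) (1 : ℂ)
          = indicatorConstLp 2 (ht.diff (hSNm N)) (measure_ne_top μ _) (1 : ℂ) := by
        intro N
        refine (Lp.ext ?_).symm
        filter_upwards [indicatorConstLp_coeFn (p := 2) (hs := ht.diff (hSNm N))
            (hμs := measure_ne_top μ _) (c := (1:ℂ)),
          indicatorConstLp_coeFn (p := 2) (hs := ht) (hμs := measure_ne_top μ t) (c := (1:ℂ)),
          indicatorConstLp_coeFn (p := 2) (hs := hSNm N) (hμs := measure_ne_top μ _)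
            (c := (1:ℂ)),
          Lp.coeFn_sub (indicatorConstLp 2 ht (measure_ne_top μ t) (1 : ℂ))
            (indicatorConstLp 2 (hSNm N) (measure_ne_top μ _) (1 : ℂ))] with ω h1 h2 h3 h4
        rw [h1, h4]
        simp only [Pi.sub_apply, h2, h3]
        have hsub : SN N ⊆ t := by
          intro ω' hω'
          simp only [hSN, Set.mem_iUnion] at hω'
          obtain ⟨n, _, h⟩ := hω'
          exact Set.mem_iUnion.mpr ⟨n, h⟩
        by_cases hω : ω ∈ t
        · by_cases hω2 : ω ∈ SN N
          · simp [Set.indicator_of_mem hω, Set.indicator_of_mem hω2,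
              Set.indicator_of_notMem (fun h : ω ∈ t \ SN N => h.2 hω2)]
          · simp [Set.indicator_of_mem hω, Set.indicator_of_notMem hω2,
              Set.indicator_of_mem (Set.mem_diff_of_mem hω hω2)]
        · simp [Set.indicator_of_notMem hω, Set.indicator_of_notMem (fun h => hω (hsub h)),
            Set.indicator_of_notMem (fun h : ω ∈ t \ SN N => hω h.1)]
      have htend : Tendsto (fun N => indicatorConstLp 2 (hSNm N) (measure_ne_top μ _) (1 : ℂ))
          atTop (nhds (indicatorConstLp 2 ht (measure_ne_top μ t) (1 : ℂ))) := by
        rw [tendsto_iff_norm_sub_tendsto_zero]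
        have hnorm : ∀ N, ‖indicatorConstLp 2 (hSNm N) (measure_ne_top μ _) (1 : ℂ)
            - indicatorConstLp 2 ht (measure_ne_top μ t) (1 : ℂ)‖
            = ((μ (t \ SN N)).toReal) ^ ((1:ℝ)/2) := by
          intro N
          rw [norm_sub_rev, hdiff N, norm_indicatorConstLp two_ne_zero ENNReal.ofNat_ne_top]
          simp [ENNReal.toReal_ofNat]
          rfl
        simp only [hnorm]
        have hmeas : Tendsto (fun N => μ (t \ SN N)) atTop (nhds 0) := by
          have h1 : Tendsto (fun N => μ (t \ SN N)) atTop (nhds (μ (⋂ N, t \ SN N))) := by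
            refine tendsto_measure_iInter_atTop
              (fun N => (ht.diff (hSNm N)).nullMeasurableSet) ?_ ⟨0, measure_ne_top μ _⟩
            intro N M hNM
            refine Set.diff_subset_diff_right ?_
            intro ω hω
            simp only [hSN, Set.mem_iUnion, Finset.mem_range] at hω ⊢
            obtain ⟨n, hn, h⟩ := hω
            exact ⟨n, lt_of_lt_of_le hn hNM, h⟩
          have h2 : (⋂ N, t \ SN N) = ∅ := by
            rw [Set.eq_empty_iff_forall_notMem]
            intro ω hω
            have hω1 := (Set.mem_iInter.mp hω 0).1
            obtain ⟨n, hn⟩ := Set.mem_iUnion.mp hω1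
            have := (Set.mem_iInter.mp hω (n+1)).2
            refine this ?_
            simp only [hSN, Set.mem_iUnion, Finset.mem_range]
            exact ⟨n, Nat.lt_succ_self n, hn⟩
          rw [h2] at h1
          simpa using h1
        have htoReal : Tendsto (fun N => (μ (t \ SN N)).toReal) atTop (nhds 0) := by
          have := (ENNReal.tendsto_toReal (by simp : (0:ℝ≥0∞) ≠ ⊤)).comp hmeas
          simpa [Function.comp_def] using this
        have := htoReal.rpow_const (Or.inr (by norm_num : (0:ℝ) ≤ 1/2))
        rw [Real.zero_rpow (by norm_num : (1:ℝ)/2 ≠ 0)] at this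
        exact this
      exact (Submodule.isClosed_topologicalClosure _).mem_of_tendsto htend
        (Filter.Eventually.of_forall hSN_mem)
  exact H hs hs

end AuxL2

/-- The Haar family `𝓗` is an orthonormal basis of `L²(Σ_A, B, μ; ℂ)`:
its elements are pairwise orthogonal unit vectors and its closed linear span is everything. -/
theorem haar_orthonormal_basis
    (hl : 2 ≤ l) (A : Matrix (Fin l) (Fin l) ℕ) (hA : Primitive A)
    (φ : SigmaA l A → ℝ) (hφ : HolderCont φ) (P : ℝ)
    (μ : Measure (SigmaA l A)) [IsProbabilityMeasure μ] (hGibbs : IsGibbs φ P μ)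
    (θinv : List (Fin l) → ℕ → Fin l)
    (hθ : ∀ (x : List (Fin l)) (hx : Admissible A x),
      Set.BijOn (θinv x) (Set.Iio (alpha A x)) {y : Fin l | A (x.getLast hx.1) y = 1})
    (u : List (Fin l) → ℕ → ℕ → ℝ)
    (hu_orth : ∀ x, Admissible A x → ∀ j < alpha A x, ∀ j' < alpha A x,
      ∑ m ∈ Finset.range (alpha A x), u x m j * u x m j' = if j = j' then 1 else 0)
    (hu_last : ∀ x, Admissible A x → ∀ m < alpha A x,
      u x m (alpha A x - 1) =
        (Real.sqrt ((μ (cylinder A x)).toReal))⁻¹ *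
          Real.sqrt ((μ (cylinder A (child θinv x m))).toReal)) :
    Orthonormal ℂ ((↑) : haarSet A μ θinv u → Lp ℂ 2 μ) ∧
      (Submodule.span ℂ (haarSet A μ θinv u)).topologicalClosure = ⊤ := by
    classical
  have hpos : ∀ x, Admissible A x → 0 < (μ (cylinder A x)).toReal :=
    fun x hx => measure_cylinder_pos hA hGibbs hx
  -- key cross lemmas
  have key1 : ∀ (y : List (Fin l)) (hy : Admissible A y) (jy : ℕ), jy + 1 < alpha A y →
      ∀ z : List (Fin l),
        (cylinder A y ⊆ cylinder A z ∨ cylinder A z ∩ cylinder A y = ∅) →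
        ⟪cylLp A μ z, haarLp A μ θinv u y jy⟫ = 0 := by
    intro y hy jy hjy z hcase
    refine inner_cylLp_haarLp_zero hpos hy (hθ y hy) ?_ (hu_last y hy) hcase
    have := hu_orth y hy (alpha A y - 1) (by omega) jy (by omega)
    rwa [if_neg (by omega)] at this
  have hcase_mk : ∀ (x y : List (Fin l)), Admissible A x → Admissible A y →
      x.length ≤ y.length → x ≠ y →
      ∀ m : ℕ, (cylinder A y ⊆ cylinder A (child θinv x m) ∨
        cylinder A (child θinv x m) ∩ cylinder A y = ∅) := by
    intro x y hx hy hlen hxy m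
    rcases prefix_or_disjoint (A := A) x y hlen with hpre | hdisj
    · have hxlt : x.length < y.length :=
        lt_of_le_of_ne hlen (fun h => hxy (hpre.eq_of_length h))
      rcases prefix_or_disjoint (A := A) (child θinv x m) y
        (by simp only [child, List.length_append, List.length_singleton]; omega)
        with hpre2 | hdisj2
      · exact Or.inl (cylinder_anti hpre2)
      · exact Or.inr hdisj2
    · refine Or.inr ?_
      rw [Set.eq_empty_iff_forall_notMem]
      rintro ω ⟨h1, h2⟩
      have : ω ∈ cylinder A x ∩ cylinder A y :=
        ⟨cylinder_anti (List.prefix_append x _) h1, h2⟩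
      rw [hdisj] at this
      exact this
  have key2 : ∀ (x y : List (Fin l)) (hx : Admissible A x) (hy : Admissible A y)
      (jx jy : ℕ), jx + 1 < alpha A x → jy + 1 < alpha A y → x.length ≤ y.length →
      ¬(x = y ∧ jx = jy) →
      ⟪haarLp A μ θinv u x jx, haarLp A μ θinv u y jy⟫ = 0 := by
    intro x y hx hy jx jy hjx hjy hlen hne
    rcases eq_or_ne x y with rfl | hxy
    · have hjne : jx ≠ jy := fun h => hne ⟨rfl, h⟩
      rw [inner_haarLp_haarLp hpos hx (hθ x hx) jx jy]
      rw [hu_orth x hx jx (by omega) jy (by omega), if_neg hjne]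
      simp
    · rw [haarLp_eq_sum, sum_inner]
      refine Finset.sum_eq_zero fun m _ => ?_
      rw [inner_smul_left, key1 y hy jy hjy (child θinv x m) (hcase_mk x y hx hy hlen hxy m)]
      simp
  have key3 : ∀ (a : Fin l) (y : List (Fin l)) (hy : Admissible A y) (jy : ℕ),
      jy + 1 < alpha A y →
      ⟪(((Real.sqrt ((μ (cylinder A [a])).toReal))⁻¹ : ℝ) : ℂ) • cylLp A μ [a],
        haarLp A μ θinv u y jy⟫ = 0 := by
    intro a y hy jy hjy
    rw [inner_smul_left]
    have hlen : ([a] : List (Fin l)).length ≤ y.length := by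
      simp only [List.length_singleton]
      have := List.length_pos_iff.mpr hy.1
      omega
    have hcase : cylinder A y ⊆ cylinder A [a] ∨ cylinder A [a] ∩ cylinder A y = ∅ := by
      rcases prefix_or_disjoint (A := A) [a] y hlen with hpre | hdisj
      · exact Or.inl (cylinder_anti hpre)
      · exact Or.inr hdisj
    rw [key1 y hy jy hjy [a] hcase]
    simp
  constructor
  · -- orthonormality
    rw [orthonormal_iff_ite]
    rintro ⟨f, hf⟩ ⟨g, hg⟩
    by_cases hfg : f = g
    · -- norm one
      subst hfg
      rw [if_pos rfl]
      rcases hf with ⟨x, j, hx, hj, rfl⟩ | ⟨a, rfl⟩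
      · rw [inner_haarLp_haarLp hpos hx (hθ x hx) j j]
        rw [hu_orth x hx j (by omega) j (by omega), if_pos rfl]
        simp
      · have hpa := hpos [a] (admissible_singleton a)
        have hs0 : Real.sqrt ((μ (cylinder A [a])).toReal) ≠ 0 := by positivity
        rw [inner_smul_left, inner_smul_right, inner_cylLp, Set.inter_self,
          Complex.conj_ofReal]
        rw [show (μ (cylinder A [a])).toReal
            = Real.sqrt ((μ (cylinder A [a])).toReal) *
              Real.sqrt ((μ (cylinder A [a])).toReal) from
          (Real.mul_self_sqrt (hpos [a] (admissible_singleton a)).le).symm]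
        push_cast
        field_simp
        rw [Real.sqrt_sq (Real.sqrt_nonneg _)]
        exact div_self (pow_ne_zero 2 (Complex.ofReal_ne_zero.mpr hs0))
    · -- orthogonality
      rw [if_neg (fun h => hfg (Subtype.ext_iff.mp h))]
      rcases hf with ⟨x, jx, hx, hjx, rfl⟩ | ⟨a, rfl⟩ <;>
        rcases hg with ⟨y, jy, hy, hjy, rfl⟩ | ⟨b, rfl⟩
      · -- haar vs haar
        have hne : ¬(x = y ∧ jx = jy) := by
          rintro ⟨rfl, rfl⟩
          exact hfg rfl
        rcases le_total x.length y.length with hlen | hlen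
        · exact key2 x y hx hy jx jy hjx hjy hlen hne
        · rw [← inner_conj_symm]
          rw [key2 y x hy hx jy jx hjy hjx hlen (fun h => hne ⟨h.1.symm, h.2.symm⟩)]
          simp
      · -- haar vs cyl
        rw [← inner_conj_symm, key3 b x hx jx hjx]
        simp
      · -- cyl vs haar
        exact key3 a y hy jy hjy
      · -- cyl vs cyl
        have hab : a ≠ b := by
          rintro rfl
          exact hfg rfl
        rw [inner_smul_left, inner_smul_right, inner_cylLp]
        rw [cylinder_disjoint (x := [a]) (y := [b]) (i := 0) (by simp) (by simp)
          (by simpa using hab)]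
        simp
  · -- density
    have hspan := cylLp_mem_span (μ := μ) hA hpos hθ hu_orth hu_last
    refine Submodule.eq_top_iff'.mpr fun f => ?_
    refine Lp.induction (by norm_num : (2 : ℝ≥0∞) ≠ ⊤)
      (fun f => f ∈ (Submodule.span ℂ (haarSet A μ θinv u)).topologicalClosure) ?_ ?_ ?_ f
    · intro c s hs hμs
      rw [Lp.simpleFunc.coe_indicatorConst]
      rw [show indicatorConstLp 2 hs hμs.ne c
          = c • indicatorConstLp 2 hs (measure_ne_top μ s) (1 : ℂ) from smul_cylInd hs c]
      exact Submodule.smul_mem _ _ (indicator_mem_closure_span hl hA hspan hs)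
    · intro f g hf hg hdisj hPf hPg
      exact Submodule.add_mem _ hPf hPg
    · exact Submodule.isClosed_topologicalClosure _


end SFT
end

section
/- Let (x_k)_{k∈ℕ} be a monotonically increasing unbounded sequence of positive real numbers. Define d_1 := sup{ α ≥ 0 : limsup_{N→∞} (Σ_{k=1}^N x_k^{−α}) / ln N = ∞ }, d_2 := inf{ α ≥ 0 : limsup_{N→∞} (Σ_{k=1}^N x_k^{−α}) / ln N = 0 }, d_3 := inf{ α ≥ 0 : Σ_{k=1}^∞ x_k^{−α} < ∞ }, and d_4 := (liminf_{k→∞} ln(x_k)/ln(k))^{−1}, with the conventions 1/∞ := 0 and 1/0 := ∞. If any one of d_1, d_2, d_3, d_4 is positive and finite, then d_1 = d_2 = d_3 = d_4. -/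
open Filter
open scoped ENNReal NNReal

/-- `d₁ := sup{α ≥ 0 : limsup_N (∑_{k≤N} x_k^{−α})/ln N = ∞}` (in `[0,∞]`, `sup ∅ = 0`). -/
noncomputable def d1 (x : ℕ → ℝ) : ℝ≥0∞ :=
  sSup ((fun α : ℝ≥0 => (α : ℝ≥0∞)) ''
    {α : ℝ≥0 | Filter.limsup
      (fun N : ℕ => ENNReal.ofReal ((∑ k ∈ Finset.range N, x k ^ (-(α : ℝ))) / Real.log N))
      atTop = ⊤})

/-- `d₂ := inf{α ≥ 0 : limsup_N (∑_{k≤N} x_k^{−α})/ln N = 0}` (in `[0,∞]`, `inf ∅ = ∞`). -/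
noncomputable def d2 (x : ℕ → ℝ) : ℝ≥0∞ :=
  sInf ((fun α : ℝ≥0 => (α : ℝ≥0∞)) ''
    {α : ℝ≥0 | Filter.limsup
      (fun N : ℕ => ENNReal.ofReal ((∑ k ∈ Finset.range N, x k ^ (-(α : ℝ))) / Real.log N))
      atTop = 0})

/-- `d₃ := inf{α ≥ 0 : ∑_k x_k^{−α} < ∞}` (in `[0,∞]`, `inf ∅ = ∞`). -/
noncomputable def d3 (x : ℕ → ℝ) : ℝ≥0∞ :=
  sInf ((fun α : ℝ≥0 => (α : ℝ≥0∞)) ''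
    {α : ℝ≥0 | Summable fun k : ℕ => x k ^ (-(α : ℝ))})

/-- `d₄ := (liminf_k ln(x_k)/ln(k))⁻¹` in `[0,∞]`, with `1/∞ = 0` and `1/0 = ∞`. -/
noncomputable def d4 (x : ℕ → ℝ) : ℝ≥0∞ :=
  (Filter.liminf (fun k : ℕ => ENNReal.ofReal (Real.log (x k) / Real.log k)) atTop)⁻¹


lemma aux_tendsto_rpow_div_log {δ : ℝ} (hδ : 0 < δ) :
    Tendsto (fun k : ℕ => (k : ℝ) ^ δ / Real.log ((k : ℝ) + 1)) atTop atTop := by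
  have h1 : Tendsto (fun y : ℝ => y ^ δ / Real.log (y + 1)) atTop atTop := by
    have hlo : (fun y : ℝ => Real.log (y + 1)) =o[atTop] fun y : ℝ => y ^ δ := by
      have h2 : (fun y : ℝ => Real.log (y + 1)) =o[atTop] fun y : ℝ => (y + 1) ^ δ :=
        (isLittleO_log_rpow_atTop hδ).comp_tendsto
          (tendsto_atTop_add_const_right _ 1 tendsto_id)
      refine h2.trans_isBigO ?_
      rw [Asymptotics.isBigO_iff]
      refine ⟨2 ^ δ, ?_⟩
      filter_upwards [eventually_ge_atTop (1:ℝ)] with y hy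
      have h0 : (0:ℝ) ≤ y := by linarith
      rw [Real.norm_of_nonneg (Real.rpow_nonneg (by linarith) _),
        Real.norm_of_nonneg (Real.rpow_nonneg h0 _), ← Real.mul_rpow (by norm_num) h0]
      exact Real.rpow_le_rpow (by linarith) (by linarith) hδ.le
    have h3 : Tendsto (fun y : ℝ => Real.log (y + 1) / y ^ δ) atTop (nhds 0) :=
      hlo.tendsto_div_nhds_zero
    have h4 : ∀ᶠ y : ℝ in atTop, Real.log (y + 1) / y ^ δ ∈ Set.Ioi (0:ℝ) := by
      filter_upwards [eventually_ge_atTop (1:ℝ)] with y hy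
      exact div_pos (Real.log_pos (by linarith)) (Real.rpow_pos_of_pos (by linarith) _)
    have h5 : Tendsto (fun y : ℝ => Real.log (y + 1) / y ^ δ) atTop (nhdsWithin 0 (Set.Ioi 0)) :=
      tendsto_nhdsWithin_iff.2 ⟨h3, h4⟩
    exact h5.inv_tendsto_nhdsGT_zero.congr (fun y => by rw [Pi.inv_apply, inv_div])
  exact h1.comp tendsto_natCast_atTop_atTop

lemma aux_summable_of_eventually_le {f g : ℕ → ℝ} (hf : ∀ n, 0 ≤ f n)
    (h : ∀ᶠ n in atTop, f n ≤ g n) (hg : Summable g) : Summable f := by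
  obtain ⟨k₀, hk₀⟩ := eventually_atTop.1 h
  have : Summable fun n => f (n + k₀) :=
    Summable.of_nonneg_of_le (fun n => hf _) (fun n => hk₀ _ le_add_self)
      ((summable_nat_add_iff k₀).2 hg)
  exact (summable_nat_add_iff k₀).1 this

/-- Lemma C: summability is monotone in the exponent. -/
lemma aux_summable_mono (x : ℕ → ℝ) (hpos : ∀ k, 0 < x k)
    (hx : Tendsto x atTop atTop) {β α : ℝ} (hβα : β ≤ α)
    (hs : Summable fun k => x k ^ (-β)) : Summable fun k => x k ^ (-α) := by
  refine aux_summable_of_eventually_le (fun k => (Real.rpow_pos_of_pos (hpos k) _).le) ?_ hs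
  filter_upwards [hx.eventually_ge_atTop 1] with k hk
  exact Real.rpow_le_rpow_of_exponent_le hk (by linarith)

/-- Lemma D: if the series converges, the limsup of partial sums over `log N` is `0`. -/
lemma aux_limsup_zero (x : ℕ → ℝ) (hpos : ∀ k, 0 < x k) {α : ℝ}
    (hs : Summable fun k : ℕ => x k ^ (-α)) :
    limsup (fun N : ℕ =>
      ENNReal.ofReal ((∑ k ∈ Finset.range N, x k ^ (-α)) / Real.log N)) atTop = 0 := by
  have hnn : ∀ k, 0 ≤ x k ^ (-α) := fun k => (Real.rpow_pos_of_pos (hpos k) _).le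
  set S := ∑' k, x k ^ (-α) with hS
  have hlog : Tendsto (fun N : ℕ => Real.log N) atTop atTop :=
    Real.tendsto_log_atTop.comp tendsto_natCast_atTop_atTop
  have h0 : Tendsto (fun N : ℕ => S / Real.log N) atTop (nhds 0) :=
    Tendsto.div_atTop tendsto_const_nhds hlog
  have h1 : Tendsto (fun N : ℕ => ENNReal.ofReal (S / Real.log N)) atTop (nhds 0) := by
    simpa using ENNReal.tendsto_ofReal h0
  have h2 : Tendsto (fun N : ℕ =>
      ENNReal.ofReal ((∑ k ∈ Finset.range N, x k ^ (-α)) / Real.log N)) atTop (nhds 0) := by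
    refine tendsto_of_tendsto_of_tendsto_of_le_of_le' tendsto_const_nhds h1
      (Eventually.of_forall fun N => zero_le) ?_
    filter_upwards [eventually_ge_atTop 2] with N hN
    apply ENNReal.ofReal_le_ofReal
    have hlogN : (0:ℝ) < Real.log N :=
      Real.log_pos (by exact_mod_cast Nat.lt_of_lt_of_le one_lt_two hN)
    exact div_le_div_of_nonneg_right
      (hs.sum_le_tsum (Finset.range N) (fun k _ => hnn k)) hlogN.le
  exact h2.limsup_eq

/-- Lemma B: if `α > e⁻¹` then the series converges. -/
lemma aux_summable_of_gt (x : ℕ → ℝ) (hpos : ∀ k, 0 < x k) {α : ℝ≥0}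
    (hα : (liminf (fun k : ℕ => ENNReal.ofReal (Real.log (x k) / Real.log k)) atTop)⁻¹
      < (α : ℝ≥0∞)) :
    Summable fun k : ℕ => x k ^ (-(α : ℝ)) := by
  set e := liminf (fun k : ℕ => ENNReal.ofReal (Real.log (x k) / Real.log k)) atTop with he
  have hα0 : (0:ℝ≥0) < α := by
    by_contra h
    push_neg at h
    rw [le_zero_iff] at h
    simp [h] at hα
  have h1 : ((α : ℝ≥0∞))⁻¹ < e := by
    have h' := ENNReal.lt_inv_iff_lt_inv.1 (lt_of_lt_of_eq hα (inv_inv ((α:ℝ≥0∞))).symm)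
    rwa [inv_inv] at h'
  obtain ⟨c, hc1, hc2⟩ := exists_between h1
  have hc_top : c ≠ ⊤ := (hc2.trans_le le_top).ne
  have hc0 : 0 < c := lt_of_le_of_lt zero_le hc1
  set p := c.toReal with hp
  have hp0 : 0 < p := ENNReal.toReal_pos hc0.ne' hc_top
  have hpα : 1 < p * (α : ℝ) := by
    have hcoe : ((α : ℝ≥0∞))⁻¹ = ((α⁻¹ : ℝ≥0) : ℝ≥0∞) := by
      rw [← ENNReal.coe_inv hα0.ne']
    have := ENNReal.toReal_strict_mono hc_top (hcoe ▸ hc1)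
    rw [ENNReal.coe_toReal] at this
    have hαR : (0:ℝ) < (α:ℝ) := hα0
    have : ((α:ℝ))⁻¹ < p := by exact_mod_cast this
    calc (1:ℝ) = (α:ℝ)⁻¹ * α := by field_simp
    _ < p * α := by exact mul_lt_mul_of_pos_right this hαR
  -- eventually log x k / log k > p
  have hev : ∀ᶠ k : ℕ in atTop, c < ENNReal.ofReal (Real.log (x k) / Real.log k) :=
    eventually_lt_of_lt_liminf hc2
  have hbound : ∀ᶠ k : ℕ in atTop, x k ^ (-(α:ℝ)) ≤ (k:ℝ) ^ (-(p * α)) := by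
    filter_upwards [hev, eventually_ge_atTop 2] with k hk hk2
    have hk1 : (1:ℝ) < (k:ℝ) := by exact_mod_cast hk2
    have hklog : 0 < Real.log k := Real.log_pos hk1
    have hkpos : (0:ℝ) < (k:ℝ) := by linarith
    -- from ofReal inequality to real inequality
    have hofr : ENNReal.ofReal p < ENNReal.ofReal (Real.log (x k) / Real.log k) := by
      rwa [hp, ENNReal.ofReal_toReal hc_top]
    have hlt : p < Real.log (x k) / Real.log k := (ENNReal.ofReal_lt_ofReal_iff'.1 hofr).1
    have hxk : (k:ℝ) ^ p < x k := by
      rw [← Real.log_lt_log_iff (Real.rpow_pos_of_pos hkpos _) (hpos k), Real.log_rpow hkpos]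
      calc p * Real.log k < (Real.log (x k) / Real.log k) * Real.log k :=
            mul_lt_mul_of_pos_right hlt hklog
      _ = Real.log (x k) := by field_simp
    have : x k ^ (-(α:ℝ)) ≤ ((k:ℝ) ^ p) ^ (-(α:ℝ)) :=
      Real.rpow_le_rpow_of_nonpos (Real.rpow_pos_of_pos hkpos _) hxk.le
        (neg_nonpos.mpr α.coe_nonneg)
    calc x k ^ (-(α:ℝ)) ≤ ((k:ℝ) ^ p) ^ (-(α:ℝ)) := this
    _ = (k:ℝ) ^ (-(p * α)) := by
        rw [← Real.rpow_mul hkpos.le]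
        ring_nf
  have hsum : Summable fun k : ℕ => (k:ℝ) ^ (-(p * α)) :=
    Real.summable_nat_rpow.2 (by linarith)
  exact aux_summable_of_eventually_le
    (fun k => (Real.rpow_pos_of_pos (hpos k) _).le) hbound hsum

/-- Lemma A: if `α < e⁻¹` then the limsup is `⊤`. -/
lemma aux_limsup_top (x : ℕ → ℝ) (hpos : ∀ k, 0 < x k) (hmono : Monotone x) {α : ℝ≥0}
    (hα : (α : ℝ≥0∞)
      < (liminf (fun k : ℕ => ENNReal.ofReal (Real.log (x k) / Real.log k)) atTop)⁻¹) :
    limsup (fun N : ℕ =>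
      ENNReal.ofReal ((∑ k ∈ Finset.range N, x k ^ (-(α : ℝ))) / Real.log N)) atTop = ⊤ := by
  set e := liminf (fun k : ℕ => ENNReal.ofReal (Real.log (x k) / Real.log k)) atTop with he
  have h1 : e < ((α : ℝ≥0∞))⁻¹ := ENNReal.lt_inv_iff_lt_inv.1 hα
  obtain ⟨c, hc1, hc2⟩ := exists_between h1
  have hc_top : c ≠ ⊤ := (hc2.trans_le le_top).ne
  have hc0 : 0 < c := (zero_le : 0 ≤ e).trans_lt hc1
  set p := c.toReal with hp
  have hp0 : 0 < p := ENNReal.toReal_pos hc0.ne' hc_top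
  have hpα : p * (α : ℝ) < 1 := by
    rcases eq_or_lt_of_le (zero_le : 0 ≤ α) with h0 | h0
    · simp [← h0]
    · have hcoe : ((α : ℝ≥0∞))⁻¹ = ((α⁻¹ : ℝ≥0) : ℝ≥0∞) := by
        rw [← ENNReal.coe_inv h0.ne']
      have h2 := ENNReal.toReal_strict_mono ENNReal.coe_ne_top
        (hcoe ▸ hc2)
      rw [ENNReal.coe_toReal] at h2
      have hαR : (0:ℝ) < (α:ℝ) := h0
      have h3 : p < ((α:ℝ))⁻¹ := by exact_mod_cast h2
      calc p * (α:ℝ) < ((α:ℝ))⁻¹ * α := mul_lt_mul_of_pos_right h3 hαR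
      _ = 1 := by field_simp
  have hδ : 0 < 1 - p * (α:ℝ) := by linarith
  have hfreq : ∃ᶠ k : ℕ in atTop, ENNReal.ofReal (Real.log (x k) / Real.log k) < c :=
    frequently_lt_of_liminf_lt (by isBoundedDefault) hc1
  have hg := aux_tendsto_rpow_div_log hδ
  rw [eq_top_iff]
  refine ENNReal.le_of_forall_nnreal_lt fun r _ => ?_
  refine le_limsup_of_frequently_le ?_
  rw [frequently_atTop]
  intro m
  have hev2 : ∀ᶠ k : ℕ in atTop,
      (r:ℝ) ≤ (k:ℝ) ^ (1 - p * (α:ℝ)) / Real.log ((k:ℝ) + 1) := hg.eventually_ge_atTop r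
  obtain ⟨k, hkP, hkr, hkm⟩ :=
    (hfreq.and_eventually (hev2.and (eventually_ge_atTop (max m 2)))).exists
  refine ⟨k + 1, le_trans (le_trans (le_max_left m 2) hkm) (Nat.le_succ k), ?_⟩
  have hk2 : 2 ≤ k := le_trans (le_max_right m 2) hkm
  have hk1 : (1:ℝ) < (k:ℝ) := by exact_mod_cast Nat.lt_of_lt_of_le one_lt_two hk2
  have hkpos : (0:ℝ) < (k:ℝ) := by linarith
  have hklog : 0 < Real.log k := Real.log_pos hk1
  have hlog1 : 0 < Real.log ((k:ℝ) + 1) := Real.log_pos (by linarith)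
  -- from the frequently event: x k < k ^ p
  have hofr : ENNReal.ofReal (Real.log (x k) / Real.log k) < ENNReal.ofReal p := by
    rwa [hp, ENNReal.ofReal_toReal hc_top]
  have hlt : Real.log (x k) / Real.log k < p := (ENNReal.ofReal_lt_ofReal_iff'.1 hofr).1
  have hxk : x k < (k:ℝ) ^ p := by
    rw [← Real.log_lt_log_iff (hpos k) (Real.rpow_pos_of_pos hkpos _), Real.log_rpow hkpos]
    calc Real.log (x k) = (Real.log (x k) / Real.log k) * Real.log k := by field_simp
    _ < p * Real.log k := mul_lt_mul_of_pos_right hlt hklog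
  -- lower bound on each term
  have hterm : ∀ j ∈ Finset.range (k + 1), (k:ℝ) ^ (-(p * (α:ℝ))) ≤ x j ^ (-(α:ℝ)) := by
    intro j hj
    have hjk : j ≤ k := Nat.lt_succ_iff.1 (Finset.mem_range.1 hj)
    have hxj : x j ≤ (k:ℝ) ^ p := le_of_lt (lt_of_le_of_lt (hmono hjk) hxk)
    have h4 : ((k:ℝ) ^ p) ^ (-(α:ℝ)) ≤ x j ^ (-(α:ℝ)) :=
      Real.rpow_le_rpow_of_nonpos (hpos j) hxj (neg_nonpos.mpr α.coe_nonneg)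
    calc (k:ℝ) ^ (-(p * (α:ℝ))) = ((k:ℝ) ^ p) ^ (-(α:ℝ)) := by
          rw [← Real.rpow_mul hkpos.le]; ring_nf
    _ ≤ x j ^ (-(α:ℝ)) := h4
  have hsum : ((k:ℝ) + 1) * (k:ℝ) ^ (-(p * (α:ℝ)))
      ≤ ∑ j ∈ Finset.range (k + 1), x j ^ (-(α:ℝ)) := by
    have := Finset.card_nsmul_le_sum (Finset.range (k + 1))
      (fun j => x j ^ (-(α:ℝ))) ((k:ℝ) ^ (-(p * (α:ℝ)))) hterm
    rwa [Finset.card_range, nsmul_eq_mul, Nat.cast_succ] at this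
  -- chain of real inequalities
  have hchain : (r:ℝ) ≤ (∑ j ∈ Finset.range (k + 1), x j ^ (-(α:ℝ))) / Real.log ((k:ℝ) + 1) := by
    refine le_trans hkr (le_trans ?_ (div_le_div_of_nonneg_right hsum hlog1.le))
    apply div_le_div_of_nonneg_right ?_ hlog1.le
    calc (k:ℝ) ^ (1 - p * (α:ℝ)) = (k:ℝ) * (k:ℝ) ^ (-(p * (α:ℝ))) := by
          rw [show (1 - p * (α:ℝ)) = 1 + -(p * (α:ℝ)) by ring, Real.rpow_add hkpos,
            Real.rpow_one]
    _ ≤ ((k:ℝ) + 1) * (k:ℝ) ^ (-(p * (α:ℝ))) :=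
          mul_le_mul_of_nonneg_right (by linarith) (Real.rpow_nonneg hkpos.le _)
  calc ((r : ℝ≥0) : ℝ≥0∞) = ENNReal.ofReal (r:ℝ) := ENNReal.ofReal_coe_nnreal.symm
  _ ≤ ENNReal.ofReal ((∑ j ∈ Finset.range (k + 1), x j ^ (-(α:ℝ))) / Real.log ((k:ℝ) + 1)) :=
      ENNReal.ofReal_le_ofReal hchain
  _ = ENNReal.ofReal ((∑ j ∈ Finset.range (k + 1), x j ^ (-(α:ℝ))) / Real.log (↑(k + 1) : ℝ)) := by
      push_cast; ring_nf

/-- For a monotonically increasing unbounded sequence of positive reals,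
if any of `d₁, d₂, d₃, d₄` is positive and finite then they are all equal. -/
theorem critical_exponents_eq (x : ℕ → ℝ) (hpos : ∀ k, 0 < x k) (hmono : Monotone x)
    (hunb : ¬ BddAbove (Set.range x))
    (hfin : (0 < d1 x ∧ d1 x < ⊤) ∨ (0 < d2 x ∧ d2 x < ⊤) ∨ (0 < d3 x ∧ d3 x < ⊤) ∨
      (0 < d4 x ∧ d4 x < ⊤)) :
    d1 x = d2 x ∧ d2 x = d3 x ∧ d3 x = d4 x := by
  clear hfin
  have hx : Tendsto x atTop atTop := tendsto_atTop_atTop_of_monotone' hmono hunb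
  set E : ℝ≥0∞ :=
    (liminf (fun k : ℕ => ENNReal.ofReal (Real.log (x k) / Real.log k)) atTop)⁻¹ with hE
  -- d3 = E
  have hd3 : d3 x = E := by
    apply le_antisymm
    · refine ENNReal.le_of_forall_pos_le_add fun ε hε hE_top => ?_
      set α : ℝ≥0 := E.toNNReal + ε with hα
      have hcoe : (α : ℝ≥0∞) = E + ε := by
        rw [hα, ENNReal.coe_add, ENNReal.coe_toNNReal hE_top.ne]
      have hEα : E < (α : ℝ≥0∞) := by
        rw [hcoe]
        exact ENNReal.lt_add_right hE_top.ne (ENNReal.coe_ne_zero.2 hε.ne')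
      have hsum : Summable fun k : ℕ => x k ^ (-(α : ℝ)) := aux_summable_of_gt x hpos hEα
      exact le_trans (sInf_le ⟨α, hsum, rfl⟩) (le_of_eq hcoe)
    · refine le_sInf ?_
      rintro b ⟨β, hβ, rfl⟩
      by_contra hlt
      push_neg at hlt
      have htop := aux_limsup_top x hpos hmono hlt
      have hzero := aux_limsup_zero x hpos (α := (β : ℝ)) hβ
      exact ENNReal.top_ne_zero (htop.symm.trans hzero)
  -- d2 = E
  have hd2 : d2 x = E := by
    apply le_antisymm
    · refine ENNReal.le_of_forall_pos_le_add fun ε hε hE_top => ?_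
      set α : ℝ≥0 := E.toNNReal + ε with hα
      have hcoe : (α : ℝ≥0∞) = E + ε := by
        rw [hα, ENNReal.coe_add, ENNReal.coe_toNNReal hE_top.ne]
      have hEα : E < (α : ℝ≥0∞) := by
        rw [hcoe]
        exact ENNReal.lt_add_right hE_top.ne (ENNReal.coe_ne_zero.2 hε.ne')
      have hsum : Summable fun k : ℕ => x k ^ (-(α : ℝ)) := aux_summable_of_gt x hpos hEα
      have hzero := aux_limsup_zero x hpos (α := (α : ℝ)) hsum
      exact le_trans (sInf_le ⟨α, hzero, rfl⟩) (le_of_eq hcoe)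
    · refine le_sInf ?_
      rintro b ⟨β, hβ, rfl⟩
      by_contra hlt
      push_neg at hlt
      have htop := aux_limsup_top x hpos hmono hlt
      exact ENNReal.top_ne_zero (htop.symm.trans hβ)
  -- d1 = E
  have hd1 : d1 x = E := by
    apply le_antisymm
    · refine sSup_le ?_
      rintro b ⟨β, hβ, rfl⟩
      by_contra hlt
      push_neg at hlt
      have hsum : Summable fun k : ℕ => x k ^ (-(β : ℝ)) := aux_summable_of_gt x hpos hlt
      have hzero := aux_limsup_zero x hpos (α := (β : ℝ)) hsum
      exact ENNReal.top_ne_zero (hβ.symm.trans hzero)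
    · refine ENNReal.le_of_forall_nnreal_lt fun r hr => ?_
      exact le_sSup ⟨r, aux_limsup_top x hpos hmono hr, rfl⟩
  have hd4 : d4 x = E := rfl
  exact ⟨hd1.trans hd2.symm, hd2.trans hd3.symm, hd3.trans hd4.symm⟩
end
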